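/- arXiv:2002.01773 — 11 statements merged into one kernel-verified Lean document; each statement's English description precedes it below -/
import Mathlib

section
/- In a finite group G, if the proportion of elements x with x^2 = 1 is strictly greater than 3/4, then every element of G satisfies x^2 = 1 (and in particular G is Abelian). -/
private lemma aux_top {G : Type*} [Group G] [Finite G] (H : Subgroup G)
    (h : Nat.card G < 2 * Nat.card H) : H = ⊤ := by
  obtain ⟨k, hk⟩ := Subgroup.card_subgroup_dvd_card H
  have hpos : 0 < Nat.card H := Nat.card_pos
  have hGpos : 0 < Nat.card G := Nat.card_pos
  have hk1 : k = 1 := by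
    rcases Nat.lt_or_ge k 2 with h2 | h2
    · interval_cases k
      · simp at hk; omega
      · rfl
    · exfalso
      have h3 : 2 * Nat.card H ≤ Nat.card H * k := by
        calc 2 * Nat.card H = Nat.card H * 2 := by ring
          _ ≤ Nat.card H * k := Nat.mul_le_mul_left _ h2
      omega
  exact Subgroup.eq_top_of_card_eq H (by rw [hk, hk1, mul_one])

theorem stmt_0 {G : Type*} [Group G] [Finite G]
    (h : 3 * Nat.card G < 4 * Nat.card {x : G // x ^ 2 = 1}) :
    (∀ x : G, x ^ 2 = 1) ∧ (∀ x y : G, x * y = y * x) := by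
  classical
  cases nonempty_fintype G
  set S : Finset G := Finset.univ.filter (fun x => x ^ 2 = 1) with hS
  have hcard : Nat.card {x : G // x ^ 2 = 1} = S.card := by
    rw [Nat.card_eq_fintype_card, Fintype.card_subtype]
  have hG : Nat.card G = Fintype.card G := Nat.card_eq_fintype_card
  rw [hcard, hG] at h
  have hSmem : ∀ x : G, x ∈ S ↔ x ^ 2 = 1 := by
    intro x; simp [hS]
  -- every involution is central
  have hcent : ∀ a : G, a ^ 2 = 1 → ∀ x : G, a * x = x * a := by
    intro a ha
    set C : Subgroup G := Subgroup.centralizer {a} with hC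
    set T : Finset G := S.image (fun x => a * x) with hT
    have hTcard : T.card = S.card := Finset.card_image_of_injective _ (mul_right_injective a)
    have hsub : (S ∩ T) ⊆ Finset.univ.filter (fun x => x ∈ C) := by
      intro x hx
      simp only [Finset.mem_inter] at hx
      obtain ⟨hx1, hx2⟩ := hx
      rw [hT, Finset.mem_image] at hx2
      obtain ⟨y, hy, hxy⟩ := hx2
      have hx1' : x ^ 2 = 1 := (hSmem x).mp hx1
      have hy' : y ^ 2 = 1 := (hSmem y).mp hy
      simp only [Finset.mem_filter, Finset.mem_univ, true_and]
      rw [hC, Subgroup.mem_centralizer_singleton_iff]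
      -- x = a * y ; show x * a = a * x
      have ha' : a * a = 1 := by rw [← sq]; exact ha
      have hy'' : y * y = 1 := by rw [← sq]; exact hy'
      have hx'' : x * x = 1 := by rw [← sq]; exact hx1'
      subst hxy
      -- (a y)(a y) = 1, a a = 1, y y = 1 ⇒ a y a y = 1 ⇒ y a = a⁻¹ y⁻¹ = a y
      have h1 : a * y * a * y = 1 := by rw [mul_assoc]; exact hx''
      have h2 : y * a = a * y := by
        have : a * (a * y * a * y) * y = a * 1 * y := by rw [h1]
        have h3 : (a * a) * (y * a) * (y * y) = a * y := by
          group at this ⊢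
          exact this
        rw [ha', hy'', one_mul, mul_one] at h3
        exact h3
      -- (a*y) * a = a * (a*y)
      calc (a * y) * a = a * (y * a) := by group
        _ = a * (a * y) := by rw [h2]
    have hCcard : (Finset.univ.filter (fun x => x ∈ C)).card = Nat.card C := by
      rw [Nat.card_eq_fintype_card, Fintype.card_subtype]
    have hint : S.card + T.card = (S ∩ T).card + (S ∪ T).card :=
      (Finset.card_inter_add_card_union S T).symm
    have hun : (S ∪ T).card ≤ Fintype.card G := by
      rw [← Finset.card_univ]; exact Finset.card_le_card (Finset.subset_univ _)
    have hle : (S ∩ T).card ≤ Nat.card C := by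
      rw [← hCcard]; exact Finset.card_le_card hsub
    have hCtop : C = ⊤ := by
      apply aux_top
      rw [hG]
      omega
    have hx : ∀ x : G, x ∈ C := fun x => hCtop ▸ Subgroup.mem_top x
    intro x
    exact ((Subgroup.mem_centralizer_singleton_iff).mp (hx x)).symm
  -- G is commutative
  have hcomm : ∀ x y : G, x * y = y * x := by
    set Z : Subgroup G := Subgroup.center G with hZ
    have hsub : S ⊆ Finset.univ.filter (fun x => x ∈ Z) := by
      intro a haS
      simp only [Finset.mem_filter, Finset.mem_univ, true_and, hZ,
        Subgroup.mem_center_iff]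
      intro g
      exact (hcent a ((hSmem a).mp haS) g).symm
    have hZcard : (Finset.univ.filter (fun x => x ∈ Z)).card = Nat.card Z := by
      rw [Nat.card_eq_fintype_card, Fintype.card_subtype]
    have hle : S.card ≤ Nat.card Z := by rw [← hZcard]; exact Finset.card_le_card hsub
    have hZtop : Z = ⊤ := by apply aux_top; rw [hG]; omega
    intro x y
    have : x ∈ Z := hZtop ▸ Subgroup.mem_top x
    exact Subgroup.mem_center_iff.mp this y |>.symm
  refine ⟨?_, hcomm⟩
  -- S is a subgroup
  set H : Subgroup G :=
    { carrier := {x : G | x ^ 2 = 1}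
      one_mem' := by simp
      mul_mem' := by
        intro x y hx hy
        simp only [Set.mem_setOf_eq] at *
        rw [Commute.mul_pow (hcomm x y), hx, hy, one_mul]
      inv_mem' := by
        intro x hx
        simp only [Set.mem_setOf_eq] at *
        rw [inv_pow, hx, inv_one] } with hH
  have hHcard : (Finset.univ.filter (fun x => x ∈ H)).card = Nat.card H := by
    rw [Nat.card_eq_fintype_card, Fintype.card_subtype]
  have hsub : S ⊆ Finset.univ.filter (fun x => x ∈ H) := by
    intro a haS
    simp only [Finset.mem_filter, Finset.mem_univ, true_and]
    exact (hSmem a).mp haS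
  have hle : S.card ≤ Nat.card H := by rw [← hHcard]; exact Finset.card_le_card hsub
  have hHtop : H = ⊤ := by apply aux_top; rw [hG]; omega
  intro x
  have : x ∈ H := hHtop ▸ Subgroup.mem_top x
  exact this
end

section
/- In a finite group G, if the proportion of elements x with x^2 = 1 is strictly greater than 3/4, then G is Abelian. -/
theorem stmt_1 {G : Type*} [Group G] [Finite G]
    (h : 3 * Nat.card G < 4 * Nat.card {x : G // x ^ 2 = 1}) :
    ∀ x y : G, x * y = y * x := by
  classical
  cases nonempty_fintype G
  set S : Finset G := Finset.univ.filter (fun x => x ^ 2 = 1) with hSdef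
  have hScard : Nat.card {x : G // x ^ 2 = 1} = S.card := by
    rw [Nat.card_eq_fintype_card, Fintype.card_subtype]
  have hn : Nat.card G = Fintype.card G := Nat.card_eq_fintype_card
  have hSbig : 3 * Fintype.card G < 4 * S.card := by
    rw [← hn, ← hScard]; exact h
  have hmemS : ∀ x : G, x ∈ S ↔ x ^ 2 = 1 := by
    intro x; simp [hSdef]
  -- subgroup with more than half the elements is the whole group
  have htop : ∀ H : Subgroup G, Fintype.card G < 2 * Nat.card H → H = ⊤ := by
    intro H hH
    have hdvd : Nat.card H ∣ Nat.card G := Subgroup.card_subgroup_dvd_card H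
    have hpos : Nat.card G ≠ 0 := Nat.card_pos.ne'
    have : Nat.card G = Nat.card H :=
      Nat.eq_of_dvd_of_lt_two_mul hpos hdvd (by omega)
    exact Subgroup.eq_top_of_card_eq H this.symm
  -- every involution is central
  have hcentral : ∀ a : G, a ^ 2 = 1 → a ∈ Subgroup.center G := by
    intro a ha
    set H := Subgroup.centralizer ({a} : Set G) with hHdef
    set T : Finset G := S.image (a * ·) with hTdef
    have hTcard : T.card = S.card :=
      Finset.card_image_of_injective _ (mul_right_injective a)
    have hsub : S ∩ T ⊆ Finset.univ.filter (fun x => x ∈ H) := by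
      intro s hs
      rw [Finset.mem_inter] at hs
      obtain ⟨hs1, hs2⟩ := hs
      rw [hTdef, Finset.mem_image] at hs2
      obtain ⟨t, ht, hts⟩ := hs2
      rw [hmemS] at hs1 ht
      have ha' : a * a = 1 := by rw [← sq]; exact ha
      have ht' : t * t = 1 := by rw [← sq]; exact ht
      have hat : a * t * (a * t) = 1 := by
        rw [hts, ← sq]; exact hs1
      -- a * t = t * a
      have hcomm : a * t = t * a := by
        have h1 : a * t = (a * t)⁻¹ := by
          rw [eq_inv_iff_mul_eq_one]; exact hat
        have h2 : (a * t)⁻¹ = t⁻¹ * a⁻¹ := mul_inv_rev a t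
        have h3 : t⁻¹ = t := by rw [eq_comm, eq_inv_iff_mul_eq_one]; exact ht'
        have h4 : a⁻¹ = a := by rw [eq_comm, eq_inv_iff_mul_eq_one]; exact ha'
        rw [h1, h2, h3, h4]
      have hcomm2 : a * s = s * a := by
        rw [← hts]
        calc a * (a * t) = (a * a) * t := by group
          _ = t := by rw [ha', one_mul]
          _ = t * (a * a) := by rw [ha', mul_one]
          _ = (t * a) * a := by group
          _ = (a * t) * a := by rw [hcomm]
      simp only [Finset.mem_filter, Finset.mem_univ, true_and]
      rw [hHdef, Subgroup.mem_centralizer_iff]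
      intro g hg
      rw [Set.mem_singleton_iff] at hg
      rw [hg]
      exact hcomm2
    have hHcard : (S ∩ T).card ≤ Nat.card H := by
      calc (S ∩ T).card ≤ (Finset.univ.filter (fun x => x ∈ H)).card :=
            Finset.card_le_card hsub
        _ = Nat.card H := by
            rw [Nat.card_eq_fintype_card, Fintype.card_subtype]
    have hunion : (S ∪ T).card ≤ Fintype.card G := by
      simpa using Finset.card_le_card (Finset.subset_univ (S ∪ T))
    have hie : (S ∩ T).card + (S ∪ T).card = S.card + T.card :=
      Finset.card_inter_add_card_union S T
    have hbig : Fintype.card G < 2 * Nat.card H := by omega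
    have hHtop := htop H hbig
    rw [Subgroup.mem_center_iff]
    intro g
    have hg : g ∈ H := hHtop ▸ Subgroup.mem_top g
    rw [hHdef, Subgroup.mem_centralizer_iff] at hg
    exact (hg a (Set.mem_singleton a)).symm
  -- the center contains S, hence is big, hence everything
  have hsub : S ⊆ Finset.univ.filter (fun x => x ∈ Subgroup.center G) := by
    intro s hs
    simp only [Finset.mem_filter, Finset.mem_univ, true_and]
    exact hcentral s ((hmemS s).mp hs)
  have hZcard : S.card ≤ Nat.card (Subgroup.center G) := by
    calc S.card ≤ (Finset.univ.filter (fun x => x ∈ Subgroup.center G)).card :=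
          Finset.card_le_card hsub
      _ = Nat.card (Subgroup.center G) := by
          rw [Nat.card_eq_fintype_card, Fintype.card_subtype]
  have hZtop : Subgroup.center G = ⊤ := htop _ (by omega)
  intro x y
  have hx : x ∈ Subgroup.center G := hZtop ▸ Subgroup.mem_top x
  exact (Subgroup.mem_center_iff.mp hx y).symm
end

section
/- In a finite group G, if x is an element with x^2 = 1 and the proportion of elements squaring to the identity exceeds 3/4, then x lies in the center of G. -/
theorem stmt_3 {G : Type*} [Group G] [Finite G] (x : G) (hx : x ^ 2 = 1)
    (h : 3 * Nat.card G < 4 * Nat.card {g : G // g ^ 2 = 1}) :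
    x ∈ Subgroup.center G := by
  classical
  haveI : Fintype G := Fintype.ofFinite G
  have hxinv : x⁻¹ = x := by
    rw [← mul_eq_one_iff_inv_eq, ← pow_two]; exact hx
  set A : Finset G := Finset.univ.filter (fun g => g ^ 2 = 1) with hA
  set B : Finset G := Finset.univ.filter (fun g => (x * g) ^ 2 = 1) with hB
  have hcardA : Nat.card {g : G // g ^ 2 = 1} = A.card := by
    rw [Nat.card_eq_fintype_card, Fintype.card_subtype]
  have hcardB : B.card = A.card := by
    apply Finset.card_bij' (fun g _ => x * g) (fun g _ => x * g)
    · intro g hg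
      simp only [hA, hB, Finset.mem_filter, Finset.mem_univ, true_and] at *
      exact hg
    · intro g hg
      simp only [hA, hB, Finset.mem_filter, Finset.mem_univ, true_and] at *
      rwa [← mul_assoc, ← pow_two, hx, one_mul]
    · intro g _
      rw [← mul_assoc, ← pow_two, hx, one_mul]
    · intro g _
      rw [← mul_assoc, ← pow_two, hx, one_mul]
  -- A ∩ B is large
  have hG : Nat.card G = Fintype.card G := Nat.card_eq_fintype_card
  have hunion : (A ∪ B).card ≤ Fintype.card G := by
    simpa using Finset.card_le_univ (A ∪ B)
  have hinter : (A ∩ B).card + Fintype.card G ≥ 2 * A.card := by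
    have := Finset.card_inter_add_card_union A B
    omega
  -- elements of A ∩ B commute with x
  have hcomm : ∀ g ∈ A ∩ B, g * x = x * g := by
    intro g hg
    simp only [hA, hB, Finset.mem_inter, Finset.mem_filter, Finset.mem_univ, true_and] at hg
    obtain ⟨h1, h2⟩ := hg
    have hginv : g⁻¹ = g := by rw [← mul_eq_one_iff_inv_eq, ← pow_two]; exact h1
    have : (x * g)⁻¹ = x * g := by rw [← mul_eq_one_iff_inv_eq, ← pow_two]; exact h2
    calc g * x = g⁻¹ * x⁻¹ := by rw [hginv, hxinv]
    _ = (x * g)⁻¹ := by rw [mul_inv_rev]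
    _ = x * g := this
  -- the centralizer of x is large
  set C := Subgroup.centralizer {x} with hC
  have hsub : A ∩ B ⊆ Finset.univ.filter (fun g => g ∈ C) := by
    intro g hg
    simp only [Finset.mem_filter, Finset.mem_univ, true_and]
    rw [hC, Subgroup.mem_centralizer_singleton_iff]
    exact hcomm g hg
  have hCcard : Nat.card C = (Finset.univ.filter (fun g => g ∈ C)).card := by
    rw [Nat.card_eq_fintype_card, Fintype.card_subtype]
  have hlarge : 2 * Nat.card C > Nat.card G := by
    have := Finset.card_le_card hsub
    omega
  have hCtop : C = ⊤ := by
    by_contra hne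
    have hidx : 2 ≤ C.index := by
      have h1 : C.index ≠ 1 := by
        simpa [Subgroup.index_eq_one] using hne
      have h0 : C.index ≠ 0 := Subgroup.index_ne_zero_of_finite
      omega
    have := Subgroup.card_mul_index C
    nlinarith [Nat.card_pos (α := C)]
  -- conclude
  rw [Subgroup.mem_center_iff]
  intro g
  have : g ∈ C := hCtop ▸ Subgroup.mem_top g
  exact (Subgroup.mem_centralizer_singleton_iff.mp this)
end

section
/- Let G be a finite group, n a natural number, and f : G^n → G a function. Let ε > 0 be such that for every finite group Q and every homomorphically-induced version of the equation f = 1, the degree of satisfiability in Q is either 1 or at most 1 − ε. Then for any normal subgroup N of G, either the image of f is contained in N, or the proportion of tuples (x_1,...,x_n) ∈ G^n with f(x_1,...,x_n) ∈ N is at most 1 − ε. (Concretely, for f given by a word w in n variables: if the proportion of tuples with w(x̄) ∈ N exceeds 1 − ε, then w(ȳ) ∈ N for all tuples ȳ ∈ G^n.) -/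
theorem stmt_4 {n : ℕ} (w : ∀ (H : Type) [Group H], (Fin n → H) → H)
    (hw : ∀ (H K : Type) [Group H] [Group K] (φ : H →* K) (x : Fin n → H),
      φ (w H x) = w K (φ ∘ x))
    (ε : ℚ) (hε : 0 < ε)
    (hgap : ∀ (Q : Type) [Group Q] [Finite Q],
      (∀ x : Fin n → Q, w Q x = 1) ∨
      (Nat.card {x : Fin n → Q // w Q x = 1} : ℚ) ≤ (1 - ε) * Nat.card (Fin n → Q))
    (G : Type) [Group G] [Finite G] (N : Subgroup G) (hN : N.Normal) :
    (∀ x : Fin n → G, w G x ∈ N) ∨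
    (Nat.card {x : Fin n → G // w G x ∈ N} : ℚ) ≤ (1 - ε) * Nat.card (Fin n → G) := by
  classical
  set Q := G ⧸ N with hQ
  let φ : G →* Q := QuotientGroup.mk' N
  have hφs : Function.Surjective φ := QuotientGroup.mk'_surjective N
  have key : ∀ x : Fin n → G, (w G x ∈ N ↔ w Q (φ ∘ x) = 1) := by
    intro x
    rw [← hw G Q φ x]
    exact (QuotientGroup.eq_one_iff _).symm
  rcases hgap Q with h | h
  · left
    intro x
    exact (key x).mpr (h _)
  · right
    -- counting
    let Φ : (Fin n → G) →* (Fin n → Q) := φ.compLeft (Fin n)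
    have hΦs : Function.Surjective Φ := fun y => by
      choose g hg using fun i => hφs (y i)
      exact ⟨g, funext hg⟩
    have hΦ : ∀ x, Φ x = φ ∘ x := fun x => rfl
    -- card of domain subtype
    have e1 : {x : Fin n → G // w G x ∈ N} ≃
        Σ y : {y : Fin n → Q // w Q y = 1}, Φ ⁻¹' {y.val} := by
      refine Equiv.symm ?_
      refine (Equiv.sigmaSubtypeFiberEquivSubtype Φ ?_).trans (Equiv.refl _)
      intro x
      rw [hΦ]
      exact key x
    have hcard1 : Nat.card {x : Fin n → G // w G x ∈ N}
        = Nat.card {y : Fin n → Q // w Q y = 1} * Nat.card Φ.ker := by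
      rw [Nat.card_congr (e1.trans ((Equiv.sigmaCongrRight fun (y : {y : Fin n → Q // w Q y = 1}) =>
        MonoidHom.fiberEquivKerOfSurjective hΦs y.val).trans
        (Equiv.sigmaEquivProd _ _))), Nat.card_prod]
    have e2 : (Fin n → G) ≃ Σ y : (Fin n → Q), Φ ⁻¹' {y} :=
      (Equiv.sigmaFiberEquiv Φ).symm
    have hcard2 : Nat.card (Fin n → G) = Nat.card (Fin n → Q) * Nat.card Φ.ker := by
      rw [Nat.card_congr (e2.trans ((Equiv.sigmaCongrRight fun y =>
        MonoidHom.fiberEquivKerOfSurjective hΦs y).trans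
        (Equiv.sigmaEquivProd _ _))), Nat.card_prod]
    rw [hcard1, hcard2]
    push_cast
    rw [← mul_assoc]
    exact mul_le_mul_of_nonneg_right h (by positivity)
end

section
/- Let G be a finite group and w a group word in n variables (inducing a map on every quotient of G) such that the equation w = 1 has satisfiability gap ε > 0 in all finite groups. If not every value of w on G^n lies in the center Z(G), then the proportion of tuples (x, x_1, ..., x_n) ∈ G^{n+1} satisfying x·w(x_1,...,x_n) = w(x_1,...,x_n)·x is at most 1 − ε/2. -/
theorem stmt_5 {n : ℕ} (w : ∀ (H : Type) [Group H], (Fin n → H) → H)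
    (hw : ∀ (H K : Type) [Group H] [Group K] (φ : H →* K) (x : Fin n → H),
      φ (w H x) = w K (φ ∘ x))
    (ε : ℚ) (hε : 0 < ε)
    (hgap : ∀ (Q : Type) [Group Q] [Finite Q],
      (∀ x : Fin n → Q, w Q x = 1) ∨
      (Nat.card {x : Fin n → Q // w Q x = 1} : ℚ) ≤ (1 - ε) * Nat.card (Fin n → Q))
    (G : Type) [Group G] [Finite G]
    (hnc : ¬ ∀ x : Fin n → G, w G x ∈ Subgroup.center G) :
    (Nat.card {p : G × (Fin n → G) // p.1 * w G p.2 = w G p.2 * p.1} : ℚ) ≤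
      (1 - ε / 2) * (Nat.card G * Nat.card (Fin n → G)) := by
  classical
  haveI : Fintype G := Fintype.ofFinite G
  set C := Subgroup.center G with hCdef
  let Q := G ⧸ C
  haveI : Fintype Q := Fintype.ofFinite Q
  -- Step 1 : w is not identically 1 on Q
  have nonall : ¬ ∀ y : Fin n → Q, w Q y = 1 := by
    intro h
    apply hnc
    intro x
    have h1 := hw G Q (QuotientGroup.mk' C) x
    rw [h _] at h1
    exact (QuotientGroup.eq_one_iff _).mp h1
  have hB : (Nat.card {y : Fin n → Q // w Q y = 1} : ℚ) ≤ (1 - ε) * Nat.card (Fin n → Q) :=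
    (hgap Q).resolve_left nonall
  -- the projection map on tuples
  let f : (Fin n → G) → (Fin n → Q) := fun x i => (x i : Q)
  have hfw : ∀ x : Fin n → G, w Q (f x) = ((w G x : G) : Q) := fun x =>
    (hw G Q (QuotientGroup.mk' C) x).symm
  -- fibers of the coset map
  have cosetEquiv : ∀ q : Q, {g : G // (g : Q) = q} ≃ C := fun q =>
    { toFun := fun g => ⟨q.out⁻¹ * g.1, by
        have h : ((q.out : G) : Q) = (g.1 : Q) := by rw [g.2, QuotientGroup.out_eq']
        exact QuotientGroup.eq.mp h⟩
      invFun := fun c => ⟨q.out * c.1, by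
        have h : ((q.out : G) : Q) = ((q.out * c.1 : G) : Q) :=
          QuotientGroup.eq.mpr (by simpa using c.2)
        rw [← h, QuotientGroup.out_eq']⟩
      left_inv := fun g => by ext; simp
      right_inv := fun c => by ext; simp }
  have hfiber : ∀ y : Fin n → Q,
      Fintype.card {x : Fin n → G // f x = y} = Fintype.card C ^ n := by
    intro y
    have e1 : {x : Fin n → G // f x = y} ≃ {x : Fin n → G // ∀ i, (x i : Q) = y i} :=
      Equiv.subtypeEquivRight (fun x => by simp [f, funext_iff])
    have e2 : {x : Fin n → G // ∀ i, (x i : Q) = y i} ≃ ∀ i : Fin n, {g : G // (g : Q) = y i} :=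
      Equiv.subtypePiEquivPi (p := fun i (g : G) => (g : Q) = y i)
    rw [Fintype.card_congr (e1.trans (e2.trans (Equiv.piCongrRight fun i => cosetEquiv (y i))))]
    simp [Fintype.card_pi, Finset.prod_const]
  -- counting the tuples with central value
  let S : Finset (Fin n → G) := Finset.univ.filter (fun x => w G x ∈ C)
  let T : Finset (Fin n → Q) := Finset.univ.filter (fun y => w Q y = 1)
  have hmapsto : ∀ x ∈ S, f x ∈ T := by
    intro x hx
    simp only [S, Finset.mem_filter] at hx
    simp only [T, Finset.mem_filter, Finset.mem_univ, true_and]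
    rw [hfw]
    exact (QuotientGroup.eq_one_iff _).mpr hx.2
  have hScard : S.card = T.card * Fintype.card C ^ n := by
    rw [Finset.card_eq_sum_card_fiberwise hmapsto]
    have key : ∀ y ∈ T, (Finset.filter (fun a => f a = y) S).card = Fintype.card C ^ n := by
      intro y hy
      simp only [T, Finset.mem_filter] at hy
      have hfe : Finset.filter (fun a => f a = y) S
          = Finset.filter (fun a => f a = y) Finset.univ := by
        ext x
        simp only [S, Finset.filter_filter, Finset.mem_filter, Finset.mem_univ, true_and]
        constructor
        · rintro ⟨_, h2⟩; exact h2
        · intro h2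
          refine ⟨?_, h2⟩
          have h3 := hfw x
          rw [h2, hy.2] at h3
          exact (QuotientGroup.eq_one_iff _).mp h3.symm
      rw [hfe, ← hfiber y, Fintype.card_subtype]
    rw [Finset.sum_congr rfl key, Finset.sum_const, smul_eq_mul]
  have hT : (T.card : ℚ) ≤ (1 - ε) * (Fintype.card Q) ^ n := by
    have h1 : Nat.card {y : Fin n → Q // w Q y = 1} = T.card := by
      rw [Nat.card_eq_fintype_card, Fintype.card_subtype]
    have h2 : (Nat.card (Fin n → Q) : ℚ) = (Fintype.card Q : ℚ) ^ n := by
      rw [Nat.card_eq_fintype_card]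
      simp [Fintype.card_fun]
    rw [h1, h2] at hB
    exact hB
  have hGQC : Fintype.card G = Fintype.card Q * Fintype.card C := by
    have := Subgroup.card_eq_card_quotient_mul_card_subgroup C
    simpa [Nat.card_eq_fintype_card] using this
  have hS_le : (S.card : ℚ) ≤ (1 - ε) * (Fintype.card G : ℚ) ^ n := by
    rw [hScard, hGQC]
    push_cast
    rw [mul_pow, ← mul_assoc]
    have hcc : (0 : ℚ) ≤ (Fintype.card C : ℚ) ^ n := by positivity
    exact mul_le_mul_of_nonneg_right hT hcc
  -- counting pairs fibered over the tuple
  let c : (Fin n → G) → ℕ := fun x => Fintype.card {g : G // g * w G x = w G x * g}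
  have hP : (Nat.card {p : G × (Fin n → G) // p.1 * w G p.2 = w G p.2 * p.1} : ℚ)
      = ∑ x : Fin n → G, (c x : ℚ) := by
    rw [Nat.card_eq_fintype_card]
    rw [Fintype.card_congr
      (⟨fun p => ⟨p.1.2, p.1.1, p.2⟩, fun s => ⟨(s.2.1, s.1), s.2.2⟩, fun p => rfl, fun s => rfl⟩ :
        {p : G × (Fin n → G) // p.1 * w G p.2 = w G p.2 * p.1} ≃
          Σ x : Fin n → G, {g : G // g * w G x = w G x * g})]
    rw [Fintype.card_sigma]
    push_cast
    rfl
  have hc_le : ∀ x, c x ≤ Fintype.card G := fun x => Fintype.card_subtype_le _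
  have hc_half : ∀ x, w G x ∉ C → 2 * c x ≤ Fintype.card G := by
    intro x hx
    have hcen : c x = Nat.card (Subgroup.centralizer {w G x}) := by
      rw [Nat.card_eq_fintype_card]
      exact Fintype.card_congr
        (Equiv.subtypeEquivRight fun g => (Subgroup.mem_centralizer_singleton_iff).symm)
    have hne : (Subgroup.centralizer {w G x}).index ≠ 1 := by
      intro h
      have htop := Subgroup.index_eq_one.mp h
      apply hx
      rw [hCdef, Subgroup.mem_center_iff]
      intro g
      have hg : g ∈ Subgroup.centralizer {w G x} := htop ▸ Subgroup.mem_top g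
      exact Subgroup.mem_centralizer_singleton_iff.mp hg
    have h0 : (Subgroup.centralizer {w G x}).index ≠ 0 := Subgroup.index_ne_zero_of_finite
    have h2 : 2 ≤ (Subgroup.centralizer {w G x}).index := by omega
    have hmi := Subgroup.card_mul_index (Subgroup.centralizer {w G x})
    rw [Nat.card_eq_fintype_card (α := G)] at hmi
    calc 2 * c x = c x * 2 := by ring
    _ ≤ c x * (Subgroup.centralizer {w G x}).index := Nat.mul_le_mul_left _ h2
    _ = Fintype.card G := by rw [hcen]; exact hmi
  -- assemble
  have hsum1 : ∑ x ∈ S, (c x : ℚ) ≤ (S.card : ℚ) * (Fintype.card G : ℚ) := by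
    have := Finset.sum_le_card_nsmul S (fun x => (c x : ℚ)) (Fintype.card G : ℚ)
      (fun x _ => Nat.cast_le.mpr (hc_le x))
    simpa [nsmul_eq_mul] using this
  have hsum2 : ∑ x ∈ Sᶜ, (c x : ℚ) ≤ (Sᶜ.card : ℚ) * ((Fintype.card G : ℚ) / 2) := by
    have := Finset.sum_le_card_nsmul Sᶜ (fun x => (c x : ℚ)) ((Fintype.card G : ℚ) / 2)
      (fun x hx => by
        have hxS : w G x ∉ C := by
          simp only [S, Finset.mem_compl, Finset.mem_filter, Finset.mem_univ, true_and] at hx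
          exact hx
        have := hc_half x hxS
        have h2 : ((2 * c x : ℕ) : ℚ) ≤ (Fintype.card G : ℚ) := by exact_mod_cast this
        push_cast at h2
        linarith)
    simpa [nsmul_eq_mul] using this
  have hcompl : (Sᶜ.card : ℚ) = (Fintype.card G : ℚ) ^ n - (S.card : ℚ) := by
    rw [Finset.card_compl]
    have hle : S.card ≤ Fintype.card (Fin n → G) := Finset.card_le_univ S
    rw [Nat.cast_sub hle]
    simp [Fintype.card_fun]
  have hsplit : (∑ x : Fin n → G, (c x : ℚ))
      = ∑ x ∈ S, (c x : ℚ) + ∑ x ∈ Sᶜ, (c x : ℚ) :=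
    (Finset.sum_add_sum_compl S _).symm
  have hRHS : ((Nat.card G : ℚ) * (Nat.card (Fin n → G) : ℚ))
      = (Fintype.card G : ℚ) * (Fintype.card G : ℚ) ^ n := by
    rw [Nat.card_eq_fintype_card, Nat.card_eq_fintype_card]
    simp [Fintype.card_fun]
  rw [hP]
  push_cast
  rw [hRHS]
  have hg0 : (0 : ℚ) ≤ (Fintype.card G : ℚ) := by positivity
  nlinarith [mul_le_mul_of_nonneg_right hS_le (by linarith : (0:ℚ) ≤ (Fintype.card G : ℚ) / 2),
    hsum1, hsum2, hsplit, hcompl]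
end

section
/- For every finite group G, either x·y^2 = y^2·x holds for all x, y ∈ G, or the proportion of pairs (x,y) ∈ G^2 with x·y^2 = y^2·x is at most 7/8. -/
/-- If three elements each conjugate `v` to `v⁻¹` and `u₁ = u₀ * u₂`, then `v ^ 2 = 1`. -/
lemma aux_inv_conj {Q : Type*} [Group Q] (v u₀ u₁ u₂ : Q)
    (h₀ : u₀ * v * u₀⁻¹ = v⁻¹) (h₁ : u₁ * v * u₁⁻¹ = v⁻¹) (h₂ : u₂ * v * u₂⁻¹ = v⁻¹)
    (h : u₁ = u₀ * u₂) : v ^ 2 = 1 := by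
  have h₂' : u₂⁻¹ * v * u₂ = v⁻¹ := by
    have := congrArg (fun z => u₂⁻¹ * z⁻¹ * u₂) h₂
    simpa [mul_assoc] using this.symm
  have h₁' : u₁ * v⁻¹ * u₁⁻¹ = v := by
    have := congrArg (fun z => z⁻¹) h₁
    simpa [mul_assoc] using this
  have key : u₀ * v * u₀⁻¹ = v := by
    rw [h] at h₁'
    calc u₀ * v * u₀⁻¹ = u₀ * (u₂ * (u₂⁻¹ * v * u₂) * u₂⁻¹) * u₀⁻¹ := by group
    _ = (u₀ * u₂) * v⁻¹ * (u₀ * u₂)⁻¹ := by rw [h₂']; group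
    _ = v := h₁'
  have : v⁻¹ = v := by rw [← h₀, key]
  rw [pow_two, mul_eq_one_iff_eq_inv]
  exact this.symm

/-- An involution `u` with `(v*u)^2 = 1` conjugates `v` to `v⁻¹`. -/
lemma aux_invol {Q : Type*} [Group Q] (v u : Q) (hu : u ^ 2 = 1) (hvu : (v * u) ^ 2 = 1) :
    u * v * u⁻¹ = v⁻¹ := by
  have hu' : u⁻¹ = u := by
    rw [inv_eq_iff_mul_eq_one, ← pow_two]; exact hu
  have h1 : v * u * (v * u) = 1 := by rw [← pow_two]; exact hvu
  rw [hu', eq_inv_iff_mul_eq_one]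
  calc u * v * u * v = u * (v * u * (v * u)) * u⁻¹ := by group
  _ = 1 := by rw [h1]; group

theorem stmt_6 {G : Type*} [Group G] [Finite G] :
    (∀ x y : G, x * y ^ 2 = y ^ 2 * x) ∨
    8 * Nat.card {p : G × G // p.1 * p.2 ^ 2 = p.2 ^ 2 * p.1} ≤ 7 * Nat.card (G × G) := by
  by_cases h : ∀ x y : G, x * y ^ 2 = y ^ 2 * x
  · exact Or.inl h
  right
  push_neg at h
  obtain ⟨x₀, y₀, hxy⟩ := h
  cases nonempty_fintype G
  classical
  set n := Fintype.card G with hn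
  -- the set of "good" y, whose square is central
  set K : Finset G := Finset.univ.filter (fun y : G => y ^ 2 ∈ Subgroup.center G) with hK
  -- key combinatorial step: if every g has 2|A_g| > n implies g ∈ K ...
  -- membership criterion via the quotient
  have memK : ∀ y : G, y ∈ K ↔ ((y : G ⧸ Subgroup.center G) : G ⧸ Subgroup.center G) ^ 2 = 1 := by
    intro y
    rw [hK, Finset.mem_filter]
    simp only [Finset.mem_univ, true_and]
    rw [← QuotientGroup.eq_one_iff (y ^ 2)]
    rfl
  have hy₀ : y₀ ∉ K := by
    intro hy
    rw [hK, Finset.mem_filter] at hy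
    exact hxy (Subgroup.mem_center_iff.mp hy.2 x₀)
  -- |K| ≤ 3n/4
  have hKcard : 4 * K.card ≤ 3 * n := by
    by_contra hc
    push_neg at hc
    -- show every g is in K, contradiction with y₀
    apply hy₀
    have main : ∀ g : G, g ∈ K := by
      intro g
      set A : Finset G := K.filter (fun k => g * k ∈ K) with hA
      have hAcard : n < 2 * A.card := by
        have hB : A = K ∩ K.image (fun k => g⁻¹ * k) := by
          ext k
          simp only [hA, Finset.mem_filter, Finset.mem_inter, Finset.mem_image]
          constructor
          · rintro ⟨hk, hgk⟩
            exact ⟨hk, ⟨g * k, hgk, by group⟩⟩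
          · rintro ⟨hk, ⟨k', hk', hkk'⟩⟩
            refine ⟨hk, ?_⟩
            rw [← hkk']
            simpa [mul_assoc] using hk'
        have hBc : (K.image (fun k => g⁻¹ * k)).card = K.card :=
          Finset.card_image_of_injective _ (mul_right_injective g⁻¹)
        have h1 := Finset.card_inter_add_card_union K (K.image (fun k => g⁻¹ * k))
        have h2 : (K ∪ K.image (fun k => g⁻¹ * k)).card ≤ n :=
          Finset.card_le_card (Finset.subset_univ _)
        rw [hBc] at h1
        rw [← hB] at h1
        omega
      have hApos : 0 < A.card := by omega
      obtain ⟨k₀, hk₀⟩ := Finset.card_pos.mp hApos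
      -- A and k₀ • A intersect
      have hint : (A ∩ A.image (fun k => k₀ * k)).Nonempty := by
        rw [← Finset.card_pos]
        have hBc : (A.image (fun k => k₀ * k)).card = A.card :=
          Finset.card_image_of_injective _ (mul_right_injective k₀)
        have h1 := Finset.card_inter_add_card_union A (A.image (fun k => k₀ * k))
        have h2 : (A ∪ A.image (fun k => k₀ * k)).card ≤ n :=
          Finset.card_le_card (Finset.subset_univ _)
        omega
      obtain ⟨k₁, hk₁⟩ := hint
      rw [Finset.mem_inter, Finset.mem_image] at hk₁
      obtain ⟨hk₁A, k₂, hk₂A, hk₁₂⟩ := hk₁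
      -- pass to the quotient
      set Q := G ⧸ Subgroup.center G
      set v : Q := (g : Q)
      have conj : ∀ k : G, k ∈ A → (k : Q) * v * (k : Q)⁻¹ = v⁻¹ := by
        intro k hk
        rw [hA, Finset.mem_filter] at hk
        obtain ⟨hkK, hgkK⟩ := hk
        have h1 : (k : Q) ^ 2 = 1 := (memK k).mp hkK
        have h2 : (v * (k : Q)) ^ 2 = 1 := by
          exact (memK (g * k)).mp hgkK
        exact aux_invol v (k : Q) h1 h2
      have hv : v ^ 2 = 1 :=
        aux_inv_conj v (k₀ : Q) (k₁ : Q) (k₂ : Q)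
          (conj k₀ hk₀) (conj k₁ hk₁A) (conj k₂ hk₂A)
          (by rw [← hk₁₂]; rfl)
      exact (memK g).mpr hv
    exact main y₀
  -- counting
  have count : Nat.card {p : G × G // p.1 * p.2 ^ 2 = p.2 ^ 2 * p.1}
      = ∑ y : G, Nat.card {x : G // x * y ^ 2 = y ^ 2 * x} := by
    have e : {p : G × G // p.1 * p.2 ^ 2 = p.2 ^ 2 * p.1}
        ≃ Σ y : G, {x : G // x * y ^ 2 = y ^ 2 * x} :=
      { toFun := fun p => ⟨p.1.2, p.1.1, p.2⟩
        invFun := fun s => ⟨(s.2.1, s.1), s.2.2⟩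
        left_inv := fun p => rfl
        right_inv := fun s => rfl }
    rw [Nat.card_congr e]
    simp [Nat.card_eq_fintype_card, Fintype.card_sigma]
  -- bounds on each fiber
  have fiber_le : ∀ y : G, Nat.card {x : G // x * y ^ 2 = y ^ 2 * x} ≤ n := by
    intro y
    rw [Nat.card_eq_fintype_card]
    exact Fintype.card_subtype_le _
  have fiber_half : ∀ y : G, y ∉ K → 2 * Nat.card {x : G // x * y ^ 2 = y ^ 2 * x} ≤ n := by
    intro y hy
    have hcent : Nat.card {x : G // x * y ^ 2 = y ^ 2 * x}
        = Nat.card (Subgroup.centralizer {y ^ 2} : Subgroup G) := by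
      apply Nat.card_congr
      apply Equiv.subtypeEquiv (Equiv.refl G)
      intro x
      simp only [Equiv.refl_apply]
      rw [Subgroup.mem_centralizer_iff]
      constructor
      · intro hx a ha
        rw [Set.mem_singleton_iff] at ha
        rw [ha]; exact hx.symm
      · intro hx
        exact (hx (y ^ 2) rfl).symm
    rw [hcent]
    set H := Subgroup.centralizer ({y ^ 2} : Set G)
    have hne : H ≠ ⊤ := by
      intro htop
      apply hy
      rw [hK, Finset.mem_filter]
      refine ⟨Finset.mem_univ _, Subgroup.mem_center_iff.mpr fun x => ?_⟩
      have : x ∈ H := htop ▸ Subgroup.mem_top x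
      exact ((Subgroup.mem_centralizer_iff.mp this) (y ^ 2) rfl).symm
    have hidx : H.index ≠ 1 := fun h1 => hne (Subgroup.index_eq_one.mp h1)
    have hidx0 : H.index ≠ 0 := Subgroup.index_ne_zero_of_finite
    have h2le : 2 ≤ H.index := by omega
    have hmul := Subgroup.card_mul_index H
    rw [Nat.card_eq_fintype_card (α := G)] at hmul
    calc 2 * Nat.card H ≤ H.index * Nat.card H := Nat.mul_le_mul_right _ h2le
    _ = n := by rw [mul_comm]; exact hmul
  -- put it together
  have split := Finset.sum_filter_add_sum_filter_not Finset.univ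
    (fun y : G => y ^ 2 ∈ Subgroup.center G)
    (fun y : G => Nat.card {x : G // x * y ^ 2 = y ^ 2 * x})
  have hsum1 : ∑ y ∈ K, Nat.card {x : G // x * y ^ 2 = y ^ 2 * x} ≤ K.card * n := by
    have := Finset.sum_le_card_nsmul K
      (fun y : G => Nat.card {x : G // x * y ^ 2 = y ^ 2 * x}) n
      (fun y _ => fiber_le y)
    simpa [smul_eq_mul] using this
  set Kc : Finset G := Finset.univ.filter (fun y : G => ¬ y ^ 2 ∈ Subgroup.center G) with hKc
  have hsum2 : ∑ y ∈ Kc, 2 * Nat.card {x : G // x * y ^ 2 = y ^ 2 * x} ≤ Kc.card * n := by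
    apply Finset.sum_le_card_nsmul
    intro y hy
    apply fiber_half
    rw [hKc, Finset.mem_filter] at hy
    rw [hK, Finset.mem_filter]
    tauto
  have hcards : K.card + Kc.card = n := by
    rw [hK, hKc]
    exact Finset.card_filter_add_card_filter_not _
  have hGG : Nat.card (G × G) = n * n := by
    rw [Nat.card_prod, Nat.card_eq_fintype_card]
  rw [count, hGG, ← split]
  have hmul2 : 2 * ∑ y ∈ Kc, Nat.card {x : G // x * y ^ 2 = y ^ 2 * x} ≤ Kc.card * n := by
    rw [Finset.mul_sum]
    exact hsum2
  nlinarith [hsum1, hmul2, hKcard, hcards,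
    Finset.sum_nonneg (fun (y : G) (_ : y ∈ Kc) =>
      Nat.zero_le (Nat.card {x : G // x * y ^ 2 = y ^ 2 * x}))]
end

section
/- Assuming Laffey's theorem (in a finite group not all of whose elements have order dividing 3, the proportion of x with x^3 = 1 is at most 7/9), for every finite group G either x·y^3 = y^3·x holds for all x, y ∈ G, or the proportion of pairs (x,y) with x·y^3 = y^3·x is at most 23/27. -/
open Subgroup Finset

section aux

variable {G : Type} [Group G] [Fintype G]

/-- The number of commuting pairs (x, y^3) as a sum of centralizer cardinalities. -/
lemma aux_count :
    Nat.card {p : G × G // p.1 * p.2 ^ 3 = p.2 ^ 3 * p.1}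
      = ∑ y : G, Nat.card (Subgroup.centralizer {y ^ 3} : Subgroup G) := by
  classical
  have e : {p : G × G // p.1 * p.2 ^ 3 = p.2 ^ 3 * p.1}
      ≃ Σ y : G, {x : G // x * y ^ 3 = y ^ 3 * x} :=
    { toFun := fun p => ⟨p.1.2, p.1.1, p.2⟩
      invFun := fun q => ⟨(q.2.1, q.1), q.2.2⟩
      left_inv := fun p => rfl
      right_inv := fun q => rfl }
  rw [Nat.card_congr e]
  simp only [Nat.card_eq_fintype_card, Fintype.card_sigma]
  refine Finset.sum_congr rfl fun y _ => ?_
  refine Fintype.card_congr (Equiv.subtypeEquivRight fun x => ?_)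
  rw [Subgroup.mem_centralizer_singleton_iff]

lemma aux_A_card :
    Nat.card {z : G // z ^ 3 ∈ Subgroup.center G}
      = Nat.card (Subgroup.center G)
        * Nat.card {q : G ⧸ Subgroup.center G // q ^ 3 = 1} := by
  classical
  have h1 : Nat.card {z : G // z ^ 3 ∈ Subgroup.center G}
      = Nat.card ((QuotientGroup.mk ⁻¹' {q : G ⧸ Subgroup.center G | q ^ 3 = 1}) : Set G) := by
    refine Nat.card_congr (Equiv.subtypeEquivRight fun z => ?_)
    simp only [Set.mem_preimage, Set.mem_setOf_eq]
    rw [← QuotientGroup.mk_pow, QuotientGroup.eq_one_iff]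
  rw [h1, Nat.card_congr (QuotientGroup.preimageMkEquivSubgroupProdSet _ _), Nat.card_prod]
  rfl

end aux

theorem stmt_9
    (hLaffey : ∀ (Q : Type) [Group Q] [Finite Q],
      (¬ ∀ x : Q, x ^ 3 = 1) → 9 * Nat.card {x : Q // x ^ 3 = 1} ≤ 7 * Nat.card Q)
    (hCent : ∀ (Q : Type) [Group Q] [Finite Q], IsPGroup 3 Q → ∀ y : Q,
      y ^ 3 ∉ Subgroup.center Q → 3 ≤ (Subgroup.centralizer {y ^ 3}).index)
    (G : Type) [Group G] [Finite G] :
    (∀ x y : G, x * y ^ 3 = y ^ 3 * x) ∨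
    27 * Nat.card {p : G × G // p.1 * p.2 ^ 3 = p.2 ^ 3 * p.1} ≤ 23 * Nat.card (G × G) := by
  classical
  by_cases hall : ∀ x y : G, x * y ^ 3 = y ^ 3 * x
  · exact Or.inl hall
  right
  have instF : Fintype G := Fintype.ofFinite G
  set n := Nat.card G with hn
  -- the set A of y whose cube is central
  set A : Finset G := Finset.univ.filter (fun z : G => z ^ 3 ∈ Subgroup.center G) with hA
  have hAmem : ∀ z : G, z ∈ A ↔ z ^ 3 ∈ Subgroup.center G := by
    intro z; simp [hA]
  have hAcard : A.card = Nat.card {z : G // z ^ 3 ∈ Subgroup.center G} := by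
    rw [Nat.card_eq_fintype_card, Fintype.card_subtype]
  -- existence of a noncentral cube
  obtain ⟨y₀, hy₀⟩ : ∃ y : G, y ^ 3 ∉ Subgroup.center G := by
    by_contra h
    push_neg at h
    exact hall fun x y => Subgroup.mem_center_iff.mp (h y) x
  -- basic centralizer facts
  have hcmul : ∀ y : G, Nat.card (Subgroup.centralizer {y ^ 3} : Subgroup G)
      * (Subgroup.centralizer {y ^ 3} : Subgroup G).index = n :=
    fun y => Subgroup.card_mul_index _
  have hcle : ∀ y : G, Nat.card (Subgroup.centralizer {y ^ 3} : Subgroup G) ≤ n := by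
    intro y
    have h := hcmul y
    have hpos : 0 < (Subgroup.centralizer {y ^ 3} : Subgroup G).index :=
      Nat.pos_of_ne_zero (Subgroup.index_ne_zero_of_finite)
    calc Nat.card (Subgroup.centralizer {y ^ 3} : Subgroup G)
        ≤ Nat.card (Subgroup.centralizer {y ^ 3} : Subgroup G)
          * (Subgroup.centralizer {y ^ 3} : Subgroup G).index :=
          Nat.le_mul_of_pos_right _ hpos
      _ = n := h
  have hidx2 : ∀ y : G, y ^ 3 ∉ Subgroup.center G →
      2 ≤ (Subgroup.centralizer {y ^ 3} : Subgroup G).index := by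
    intro y hy
    have h1 : (Subgroup.centralizer {y ^ 3} : Subgroup G).index ≠ 1 := by
      rw [Ne, Subgroup.index_eq_one, Subgroup.centralizer_eq_top_iff_subset,
        Set.singleton_subset_iff]
      exact hy
    have h0 : (Subgroup.centralizer {y ^ 3} : Subgroup G).index ≠ 0 :=
      Subgroup.index_ne_zero_of_finite
    omega
  have hsum := aux_count (G := G)
  have hcardA : A.card + Aᶜ.card = n := by
    rw [Finset.card_add_card_compl, hn, Nat.card_eq_fintype_card]
  have hprod : Nat.card (G × G) = n * n := by rw [Nat.card_prod]
  rw [hsum, hprod]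
  by_cases hex : ∃ y : G, (Subgroup.centralizer {y ^ 3} : Subgroup G).index = 2
  · -- Case I : some cube has centralizer of index 2; then A ⊆ that centralizer
    obtain ⟨y₁, hy₁⟩ := hex
    set H := (Subgroup.centralizer {y₁ ^ 3} : Subgroup G) with hH
    have hAH : ∀ z ∈ A, z ∈ H := by
      intro z hz
      rw [hAmem] at hz
      have hz3 : z ^ 3 ∈ H := Subgroup.center_le_centralizer _ hz
      have hz2 : z ^ 2 ∈ H := Subgroup.sq_mem_of_index_two hy₁ z
      have hm : z ^ 3 * (z ^ 2)⁻¹ ∈ H := mul_mem hz3 (inv_mem hz2)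
      simpa [pow_succ, mul_assoc] using hm
    have hAcard2 : 2 * A.card ≤ n := by
      have hsub : A.card ≤ Nat.card H := by
        have hss : A ⊆ Finset.univ.filter (fun x : G => x ∈ H) := by
          intro z hz
          simp only [Finset.mem_filter, Finset.mem_univ, true_and]
          exact hAH z hz
        calc A.card ≤ (Finset.univ.filter (fun x : G => x ∈ H)).card :=
              Finset.card_le_card hss
          _ = Nat.card H := by rw [Nat.card_eq_fintype_card, Fintype.card_subtype]
      have h := hcmul y₁
      rw [← hH, hy₁] at h
      omega
    -- for y ∉ A : 2 * c y ≤ n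
    have hbad : ∀ y ∈ Aᶜ, 2 * Nat.card (Subgroup.centralizer {y ^ 3} : Subgroup G) ≤ n := by
      intro y hy
      rw [Finset.mem_compl, hAmem] at hy
      have h2 := hidx2 y hy
      have h := hcmul y
      nlinarith [Nat.card_pos (α := (Subgroup.centralizer {y ^ 3} : Subgroup G))]
    have key : 2 * ∑ y : G, Nat.card (Subgroup.centralizer {y ^ 3} : Subgroup G)
        ≤ (A.card + n) * n := by
      rw [← Finset.sum_add_sum_compl A, Nat.mul_add]
      have h1 : 2 * ∑ y ∈ A, Nat.card (Subgroup.centralizer {y ^ 3} : Subgroup G)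
          ≤ 2 * (A.card * n) := by
        have h := Finset.sum_le_card_nsmul A _ n (fun y _ => hcle y)
        simpa [smul_eq_mul] using Nat.mul_le_mul_left 2 h
      have h2 : 2 * ∑ y ∈ Aᶜ, Nat.card (Subgroup.centralizer {y ^ 3} : Subgroup G)
          ≤ Aᶜ.card * n := by
        rw [Finset.mul_sum]
        exact Finset.sum_le_card_nsmul Aᶜ _ n hbad
      calc 2 * ∑ y ∈ A, _ + 2 * ∑ y ∈ Aᶜ, _ ≤ 2 * (A.card * n) + Aᶜ.card * n :=
            Nat.add_le_add h1 h2
        _ = (A.card + n) * n := by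
            rw [← hcardA]; ring
    nlinarith [key, hAcard2, Nat.mul_le_mul hAcard2 (le_refl n), Nat.zero_le n]
  · -- Case II : every noncentral cube has centralizer index ≥ 3
    push_neg at hex
    have hbad : ∀ y ∈ Aᶜ, 3 * Nat.card (Subgroup.centralizer {y ^ 3} : Subgroup G) ≤ n := by
      intro y hy
      rw [Finset.mem_compl, hAmem] at hy
      have h2 := hidx2 y hy
      have h2' := hex y
      have h3 : 3 ≤ (Subgroup.centralizer {y ^ 3} : Subgroup G).index := by omega
      have h := hcmul y
      nlinarith [Nat.card_pos (α := (Subgroup.centralizer {y ^ 3} : Subgroup G))]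
    -- Laffey on G / Z(G)
    have hLa : 9 * A.card ≤ 7 * n := by
      have hnot : ¬ ∀ q : G ⧸ Subgroup.center G, q ^ 3 = 1 := by
        intro h
        apply hy₀
        have h' := h (QuotientGroup.mk y₀)
        rwa [← QuotientGroup.mk_pow, QuotientGroup.eq_one_iff] at h'
      have hL := hLaffey (G ⧸ Subgroup.center G) hnot
      have hq : Nat.card (Subgroup.center G) * Nat.card (G ⧸ Subgroup.center G) = n := by
        rw [hn, Subgroup.card_eq_card_quotient_mul_card_subgroup (Subgroup.center G)]
        ring
      rw [hAcard, aux_A_card]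
      calc 9 * (Nat.card (Subgroup.center G)
            * Nat.card {q : G ⧸ Subgroup.center G // q ^ 3 = 1})
          = Nat.card (Subgroup.center G)
            * (9 * Nat.card {q : G ⧸ Subgroup.center G // q ^ 3 = 1}) := by ring
        _ ≤ Nat.card (Subgroup.center G) * (7 * Nat.card (G ⧸ Subgroup.center G)) :=
            Nat.mul_le_mul_left _ hL
        _ = 7 * n := by rw [← hq]; ring
    have key : 3 * ∑ y : G, Nat.card (Subgroup.centralizer {y ^ 3} : Subgroup G)
        ≤ (2 * A.card + n) * n := by
      rw [← Finset.sum_add_sum_compl A, Nat.mul_add]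
      have h1 : 3 * ∑ y ∈ A, Nat.card (Subgroup.centralizer {y ^ 3} : Subgroup G)
          ≤ 3 * (A.card * n) := by
        have h := Finset.sum_le_card_nsmul A _ n (fun y _ => hcle y)
        simpa [smul_eq_mul] using Nat.mul_le_mul_left 3 h
      have h2 : 3 * ∑ y ∈ Aᶜ, Nat.card (Subgroup.centralizer {y ^ 3} : Subgroup G)
          ≤ Aᶜ.card * n := by
        rw [Finset.mul_sum]
        exact Finset.sum_le_card_nsmul Aᶜ _ n hbad
      calc 3 * ∑ y ∈ A, _ + 3 * ∑ y ∈ Aᶜ, _ ≤ 3 * (A.card * n) + Aᶜ.card * n :=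
            Nat.add_le_add h1 h2
        _ = (2 * A.card + n) * n := by rw [← hcardA]; ring
    nlinarith [key, hLa, Nat.mul_le_mul hLa (le_refl n), Nat.zero_le n]
end

section
/- There exists a group G of order 243 in which the proportion of pairs (x,y) ∈ G^2 satisfying x·y^3 = y^3·x is exactly 23/27. -/
set_option maxRecDepth 10000
set_option maxHeartbeats 1000000

namespace Stmt10

abbrev N := Multiplicative (ZMod 9 × ZMod 9)
abbrev H := Multiplicative (ZMod 3)

def addf : (ZMod 9 × ZMod 9) ≃+ (ZMod 9 × ZMod 9) where
  toFun p := (p.1 + 6 * p.2, p.1 + p.2)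
  invFun p := (7 * p.1 + 3 * p.2, 2 * p.1 + 7 * p.2)
  left_inv := by decide
  right_inv := by decide
  map_add' p q := by
    obtain ⟨a, b⟩ := p
    obtain ⟨c, d⟩ := q
    simp only [Prod.mk_add_mk, Prod.mk.injEq]
    constructor <;> ring

def f : MulAut N := AddEquiv.toMultiplicative addf

lemma hf3 : f ^ 3 = 1 := by
  ext x : 1
  revert x
  decide

lemma key (n : ℕ) : f ^ (n % 3) = f ^ n := by
  conv_rhs => rw [← Nat.mod_add_div n 3]
  rw [pow_add, pow_mul, hf3, one_pow, mul_one]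

def φ : H →* MulAut N where
  toFun x := f ^ (x.toAdd).val
  map_one' := rfl
  map_mul' a b := by
    show f ^ ((a.toAdd + b.toAdd).val) = _
    rw [ZMod.val_add, key, pow_add]

abbrev G := N ⋊[φ] H

instance : DecidableEq G := fun x y =>
  decidable_of_iff (x.left = y.left ∧ x.right = y.right)
    (by constructor
        · rintro ⟨h1, h2⟩; exact SemidirectProduct.ext h1 h2
        · rintro rfl; exact ⟨rfl, rfl⟩)

def gEquiv : G ≃ N × H where
  toFun x := (x.left, x.right)
  invFun p := ⟨p.1, p.2⟩
  left_inv _ := rfl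
  right_inv _ := rfl

instance : Fintype G := Fintype.ofEquiv _ gEquiv.symm

lemma comm_iff (x z : G) (hz : z.right = 1) :
    x * z = z * x ↔ φ x.right z.left = z.left := by
  constructor
  · intro h
    have h1 := congrArg SemidirectProduct.left h
    rw [SemidirectProduct.mul_left, SemidirectProduct.mul_left, hz, map_one,
      MulAut.one_apply, mul_comm z.left x.left] at h1
    exact mul_left_cancel h1
  · intro h
    apply SemidirectProduct.ext
    · rw [SemidirectProduct.mul_left, SemidirectProduct.mul_left, hz, map_one,
        MulAut.one_apply, h, mul_comm]
    · rw [SemidirectProduct.mul_right, SemidirectProduct.mul_right, hz, mul_one, one_mul]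

lemma cube_right (y : G) : (y ^ 3).right = 1 := by
  have h1 : (y ^ 3).right = y.right ^ 3 := map_pow SemidirectProduct.rightHom y 3
  have h2 : ∀ h : H, h ^ 3 = 1 := by decide
  rw [h1, h2]

def E2 (z : G) (hz : z.right = 1) :
    {x : G // x * z = z * x} ≃ N × {h : H // φ h z.left = z.left} where
  toFun x := (x.1.left, ⟨x.1.right, (comm_iff x.1 z hz).mp x.2⟩)
  invFun p := ⟨⟨p.1, p.2.1⟩, (comm_iff ⟨p.1, p.2.1⟩ z hz).mpr p.2.2⟩
  left_inv x := Subtype.ext rfl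
  right_inv p := rfl

def E1 : {p : G × G // p.1 * p.2 ^ 3 = p.2 ^ 3 * p.1} ≃
    Σ y : G, {x : G // x * y ^ 3 = y ^ 3 * x} where
  toFun p := ⟨p.1.2, ⟨p.1.1, p.2⟩⟩
  invFun q := ⟨(q.2.1, q.1), q.2.2⟩
  left_inv p := rfl
  right_inv q := rfl

lemma count : Fintype.card {p : G × G // p.1 * p.2 ^ 3 = p.2 ^ 3 * p.1} = 50301 := by
  rw [Fintype.card_congr E1, Fintype.card_sigma]
  have : ∀ y : G, Fintype.card {x : G // x * y ^ 3 = y ^ 3 * x}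
      = 81 * Fintype.card {h : H // φ h ((y ^ 3).left) = (y ^ 3).left} := by
    intro y
    rw [Fintype.card_congr (E2 (y ^ 3) (cube_right y)), Fintype.card_prod]
    norm_num
  simp only [this, ← Finset.mul_sum]
  have : ∑ y : G, Fintype.card {h : H // φ h ((y ^ 3).left) = (y ^ 3).left} = 621 := by
    decide
  rw [this]
  norm_num

lemma cardG : Fintype.card G = 243 := by decide
end Stmt10
theorem t2 : 27 * Nat.card {p : Stmt10.G × Stmt10.G // p.1 * p.2 ^ 3 = p.2 ^ 3 * p.1} = 23 * Nat.card (Stmt10.G × Stmt10.G) := by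
  rw [Nat.card_eq_fintype_card, Nat.card_eq_fintype_card, Stmt10.count, Fintype.card_prod, Stmt10.cardG]
theorem t1 : Nat.card Stmt10.G = 243 := by rw [Nat.card_eq_fintype_card]; exact Stmt10.cardG
theorem stmt_10 :
    ∃ (G : Type) (_ : Group G) (_ : Finite G), Nat.card G = 243 ∧
      27 * Nat.card {p : G × G // p.1 * p.2 ^ 3 = p.2 ^ 3 * p.1} = 23 * Nat.card (G × G) :=
  ⟨Stmt10.G, inferInstance, inferInstance, t1, t2⟩
end

section
/- For every finite group G, either xy = yx^{-1} holds for all pairs (x,y) ∈ G^2, or the proportion of pairs (x,y) with xy = yx^{-1} is at most 5/8. -/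
open Subgroup

theorem stmt_15 {G : Type*} [Group G] [Finite G] :
    (∀ x y : G, x * y = y * x⁻¹) ∨
    8 * Nat.card {p : G × G // p.1 * p.2 = p.2 * p.1⁻¹} ≤ 5 * Nat.card (G × G) := by
  classical
  have _inst := Fintype.ofFinite G
  by_cases hsq : ∀ x : G, x * x = 1
  · left
    have hinv : ∀ x : G, x⁻¹ = x := fun x =>
      (eq_inv_of_mul_eq_one_left (hsq x)).symm
    have hcomm : ∀ x y : G, x * y = y * x := by
      intro x y
      have h := hsq (x * y)
      have : x * y = (x * y)⁻¹ := eq_inv_of_mul_eq_one_left h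
      rw [mul_inv_rev, hinv, hinv] at this
      exact this
    intro x y
    rw [hinv, hcomm]
  · right
    set n := Nat.card G with hn
    -- fiberwise count
    have hS : Nat.card {p : G × G // p.1 * p.2 = p.2 * p.1⁻¹}
        = ∑ x : G, Nat.card {y : G // x * y = y * x⁻¹} := by
      rw [Nat.card_congr (Equiv.subtypeProdEquivSigmaSubtype
        fun x y : G => x * y = y * x⁻¹)]
      simp [Nat.card_eq_fintype_card]
    -- each fiber injects into the centralizer
    have tle : ∀ x : G, Nat.card {y : G // x * y = y * x⁻¹}
        ≤ Nat.card (centralizer ({x} : Set G)) := by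
      intro x
      by_cases hex : ∃ y : G, x * y = y * x⁻¹
      · obtain ⟨y0, hy0⟩ := hex
        have c0 : y0⁻¹ * x * y0 = x⁻¹ := by
          rw [mul_assoc, hy0, ← mul_assoc, inv_mul_cancel, one_mul]
        have hf : Function.Injective
            (fun y : {y : G // x * y = y * x⁻¹} =>
              (⟨y.1 * y0⁻¹, by
                rw [mem_centralizer_singleton_iff]
                calc y.1 * y0⁻¹ * x = y.1 * (y0⁻¹ * x * y0) * y0⁻¹ := by group
                  _ = y.1 * x⁻¹ * y0⁻¹ := by rw [c0]
                  _ = x * y.1 * y0⁻¹ := by rw [← y.2]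
                  _ = x * (y.1 * y0⁻¹) := by rw [mul_assoc]⟩ :
                  centralizer ({x} : Set G))) := by
          intro a b hab2
          apply Subtype.ext
          have h := congrArg (fun z : centralizer ({x} : Set G) => (z : G) * y0) hab2
          simpa [mul_assoc] using h
        exact Nat.card_le_card_of_injective _ hf
      · have : IsEmpty {y : G // x * y = y * x⁻¹} := by
          constructor; rintro ⟨y, hy⟩; exact hex ⟨y, hy⟩
        simp [Nat.card_of_isEmpty]
    have tlen : ∀ x : G, Nat.card {y : G // x * y = y * x⁻¹} ≤ n := fun x =>
      Nat.card_le_card_of_injective (fun y => y.1) (fun a b h => Subtype.ext h)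
    have hnn : Nat.card (G × G) = n * n := by rw [Nat.card_prod]
    rw [hS, hnn]
    by_cases hab : ∀ x y : G, x * y = y * x
    · -- abelian case: condition forces x*x = 1
      obtain ⟨a, ha⟩ := not_forall.mp hsq
      set H : Subgroup G :=
        { carrier := {x : G | x * x = 1}
          one_mem' := by simp
          mul_mem' := by
            intro p q hp hq
            have : p * q * (p * q) = (p * p) * (q * q) := by
              rw [mul_assoc p q (p*q), ← mul_assoc q p q, ← hab p q]; group
            simp only [Set.mem_setOf_eq] at *
            rw [this, hp, hq, one_mul]
          inv_mem' := by
            intro p hp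
            simp only [Set.mem_setOf_eq] at *
            rw [← mul_inv_rev, hp, inv_one] } with hH
      have hHne : H ≠ ⊤ := by
        intro h
        exact ha (h ▸ Subgroup.mem_top a : a ∈ H)
      have hHcard : 2 * Nat.card H ≤ n := by
        have h1 : 1 < H.index := one_lt_index_of_ne_top hHne
        calc 2 * Nat.card H ≤ H.index * Nat.card H := by
              exact Nat.mul_le_mul_right _ h1
          _ = n := by rw [mul_comm, H.card_mul_index]
      have tz : ∀ x : G, x ∉ H → Nat.card {y : G // x * y = y * x⁻¹} = 0 := by
        intro x hx
        have : IsEmpty {y : G // x * y = y * x⁻¹} := by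
          constructor; rintro ⟨y, hy⟩
          apply hx
          have h1 : y * x = y * x⁻¹ := by rw [← hab, hy]
          have h2 : x = x⁻¹ := mul_left_cancel h1
          show x * x = 1
          nth_rewrite 2 [h2]
          exact mul_inv_cancel x
        simp [Nat.card_of_isEmpty]
      calc 8 * ∑ x : G, Nat.card {y : G // x * y = y * x⁻¹}
          = 8 * ((∑ x ∈ Finset.univ.filter (fun x => x ∈ H),
              Nat.card {y : G // x * y = y * x⁻¹})
            + ∑ x ∈ Finset.univ.filter (fun x => ¬ x ∈ H),
              Nat.card {y : G // x * y = y * x⁻¹}) := by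
            rw [Finset.sum_filter_add_sum_filter_not]
        _ ≤ 8 * ((Finset.univ.filter (fun x => x ∈ H)).card * n + 0) := by
            apply Nat.mul_le_mul_left
            apply Nat.add_le_add
            · calc _ ≤ ∑ _x ∈ Finset.univ.filter (fun x => x ∈ H), n :=
                    Finset.sum_le_sum fun x _ => tlen x
                _ = _ := by rw [Finset.sum_const, smul_eq_mul]
            · apply Nat.le_of_eq
              apply Finset.sum_eq_zero
              intro x hx
              exact tz x (Finset.mem_filter.mp hx).2
        _ = 8 * (Nat.card H * n) := by
            rw [Nat.add_zero]
            congr 2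
            rw [Nat.card_eq_fintype_card, Fintype.card_subtype]
        _ ≤ 5 * (n * n) := by
            have := hHcard
            nlinarith [Nat.zero_le n]
    · -- nonabelian case
      have hZ4 : 4 * Nat.card (center G) ≤ n := by
        have hi4 : 4 ≤ (center G).index := by
          by_contra h
          push_neg at h
          have hne : (center G).index ≠ 0 := index_ne_zero_of_finite
          have hcyc : IsCyclic (G ⧸ center G) := by
            have hc : Nat.card (G ⧸ center G) = (center G).index := (center G).index_eq_card.symm
            interval_cases hidx : (center G).index
            · exact absurd rfl hne
            · have : Subsingleton (G ⧸ center G) := (Nat.card_eq_one_iff_unique.mp hc).1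
              infer_instance
            · have : Fact (Nat.Prime 2) := ⟨Nat.prime_two⟩
              exact isCyclic_of_prime_card (p := 2) hc
            · have : Fact (Nat.Prime 3) := ⟨Nat.prime_three⟩
              exact isCyclic_of_prime_card (p := 3) hc
          exact hab
            (commGroupOfCyclicCenterQuotient (QuotientGroup.mk' (center G))
              (by rw [QuotientGroup.ker_mk'])).mul_comm
        calc 4 * Nat.card (center G) ≤ (center G).index * Nat.card (center G) :=
              Nat.mul_le_mul_right _ hi4
          _ = n := by rw [mul_comm, (center G).card_mul_index]
      have hcen : ∀ x : G, x ∉ center G →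
          2 * Nat.card {y : G // x * y = y * x⁻¹} ≤ n := by
        intro x hx
        have hne : centralizer ({x} : Set G) ≠ ⊤ := by
          intro h
          apply hx
          rw [Subgroup.mem_center_iff]
          intro g
          have : g ∈ centralizer ({x} : Set G) := h ▸ Subgroup.mem_top g
          exact (mem_centralizer_singleton_iff.mp this).symm ▸ (mem_centralizer_singleton_iff.mp this)
        have h1 : 1 < (centralizer ({x} : Set G)).index := one_lt_index_of_ne_top hne
        calc 2 * Nat.card {y : G // x * y = y * x⁻¹}
            ≤ 2 * Nat.card (centralizer ({x} : Set G)) :=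
              Nat.mul_le_mul_left _ (tle x)
          _ ≤ (centralizer ({x} : Set G)).index * Nat.card (centralizer ({x} : Set G)) :=
              Nat.mul_le_mul_right _ h1
          _ = n := by rw [mul_comm, (centralizer ({x} : Set G)).card_mul_index]
      have hsplit := Finset.sum_filter_add_sum_filter_not Finset.univ
        (fun x : G => x ∈ center G)
        (fun x => Nat.card {y : G // x * y = y * x⁻¹})
      have hZcard : (Finset.univ.filter (fun x : G => x ∈ center G)).card
          = Nat.card (center G) := by
        rw [Nat.card_eq_fintype_card, Fintype.card_subtype]
      have hcards : (Finset.univ.filter (fun x : G => x ∈ center G)).card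
          + (Finset.univ.filter (fun x : G => ¬ x ∈ center G)).card = n := by
        rw [Finset.card_filter_add_card_filter_not, Finset.card_univ]
        exact Nat.card_eq_fintype_card.symm
      have b1 : ∑ x ∈ Finset.univ.filter (fun x : G => x ∈ center G),
          Nat.card {y : G // x * y = y * x⁻¹}
          ≤ (Finset.univ.filter (fun x : G => x ∈ center G)).card * n := by
        calc _ ≤ ∑ _x ∈ Finset.univ.filter (fun x : G => x ∈ center G), n :=
              Finset.sum_le_sum fun x _ => tlen x
          _ = _ := by rw [Finset.sum_const, smul_eq_mul]
      have b2 : 2 * ∑ x ∈ Finset.univ.filter (fun x : G => ¬ x ∈ center G),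
          Nat.card {y : G // x * y = y * x⁻¹}
          ≤ (Finset.univ.filter (fun x : G => ¬ x ∈ center G)).card * n := by
        rw [Finset.mul_sum]
        calc _ ≤ ∑ _x ∈ Finset.univ.filter (fun x : G => ¬ x ∈ center G), n :=
              Finset.sum_le_sum fun x hx =>
                hcen x (Finset.mem_filter.mp hx).2
          _ = _ := by rw [Finset.sum_const, smul_eq_mul]
      rw [← hsplit]
      set A := (Finset.univ.filter (fun x : G => x ∈ center G)).card with hA
      set B := (Finset.univ.filter (fun x : G => ¬ x ∈ center G)).card with hB
      have hZA : 4 * A ≤ n := by rw [hZcard]; exact hZ4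
      nlinarith [b1, b2, hcards, hZA, Nat.zero_le n]
end

section
/- Let G be a group, H a finite-index subgroup of G, and a, b ∈ G such that every x ∈ aH commutes with every y ∈ bH. Then G is virtually Abelian, i.e., G has a finite-index Abelian subgroup. -/
theorem stmt_18 {G : Type*} [Group G] (H : Subgroup G) (hH : H.FiniteIndex) (a b : G)
    (h : ∀ h₁ ∈ H, ∀ h₂ ∈ H, (a * h₁) * (b * h₂) = (b * h₂) * (a * h₁)) :
    ∃ K : Subgroup G, K.FiniteIndex ∧ ∀ x ∈ K, ∀ y ∈ K, x * y = y * x := by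
  refine ⟨H, hH, fun x hx y hy => ?_⟩
  have hab : a * b = b * a := by simpa using h 1 H.one_mem 1 H.one_mem
  have ha : ∀ z ∈ H, a * z = z * a := by
    intro z hz
    have h1 := h 1 H.one_mem z hz
    simp only [mul_one] at h1
    -- h1 : a * (b * z) = b * z * a
    have : b * (a * z) = b * (z * a) := by
      rw [← mul_assoc, ← hab, mul_assoc, h1, mul_assoc]
    exact mul_left_cancel this
  have hb : ∀ z ∈ H, b * z = z * b := by
    intro z hz
    have h1 := h z hz 1 H.one_mem
    simp only [mul_one] at h1
    -- h1 : a * z * b = b * (a * z)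
    have : a * (z * b) = a * (b * z) := by
      rw [← mul_assoc, h1, ← mul_assoc, ← hab, mul_assoc]
    exact (mul_left_cancel this).symm
  have key := h x hx y hy
  -- (a*x)*(b*y) = (b*y)*(a*x)
  have lhs : (a * x) * (b * y) = (a * b) * (x * y) := by
    rw [mul_assoc, ← mul_assoc x b y, ← hb x hx]
    group
  have rhs : (b * y) * (a * x) = (a * b) * (y * x) := by
    rw [mul_assoc, ← mul_assoc y a x, ← ha y hy, hab]
    group
  have : (a * b) * (x * y) = (a * b) * (y * x) := by rw [← lhs, ← rhs, key]
  exact mul_left_cancel this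
end

section
/- There exists a group G with a subgroup H of index 2 and a coset gH such that x·y^2 = y^2·x holds for all x, y ∈ gH, yet the equation x·y^2 = y^2·x is not a law in any finite-index subgroup of G. (Concretely: in the group G generated by Z, Y, X, F with relations F^2 = 1, X central, ZF = FZ^{-1}, YF = FY^{-1}, YZ = ZYX, every element w of the coset F·⟨Z,Y,X⟩ satisfies w^2 ∈ Z(G), while no finite-index subgroup of G satisfies xy^2 = y^2x identically.) -/
/-- Normal form model: `⟨k, ℓ, m, n⟩` represents `Z^k Y^ℓ X^m F^n`. -/
@[ext]
structure GG : Type where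
  k : ℤ
  l : ℤ
  m : ℤ
  n : ZMod 2

namespace GG

/-- The sign by which `F^n` conjugates `Z` and `Y`. -/
def sgn (n : ZMod 2) : ℤ := if n = 0 then 1 else -1

@[simp] lemma sgn_add : ∀ a b : ZMod 2, sgn (a + b) = sgn a * sgn b := by decide
lemma sgn_mul_self : ∀ a : ZMod 2, sgn a * sgn a = 1 := by decide
@[simp] lemma sgn_zero : sgn 0 = 1 := rfl
@[simp] lemma sgn_one : sgn 1 = -1 := rfl

instance : Group GG where
  mul a b := ⟨a.k + sgn a.n * b.k, a.l + sgn a.n * b.l,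
      a.m + b.m + a.l * sgn a.n * b.k, a.n + b.n⟩
  one := ⟨0, 0, 0, 0⟩
  inv a := ⟨-(sgn a.n * a.k), -(sgn a.n * a.l), -a.m + a.l * a.k, a.n⟩
  mul_assoc a b c := by
    ext
    · show a.k + sgn a.n * b.k + sgn (a.n + b.n) * c.k
        = a.k + sgn a.n * (b.k + sgn b.n * c.k)
      simp; ring
    · show a.l + sgn a.n * b.l + sgn (a.n + b.n) * c.l
        = a.l + sgn a.n * (b.l + sgn b.n * c.l)
      simp; ring
    · show a.m + b.m + a.l * sgn a.n * b.k + c.m + (a.l + sgn a.n * b.l) * sgn (a.n + b.n) * c.k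
        = a.m + (b.m + c.m + b.l * sgn b.n * c.k) + a.l * sgn a.n * (b.k + sgn b.n * c.k)
      simp only [sgn_add]
      linear_combination b.l * sgn b.n * c.k * sgn_mul_self a.n
    · show a.n + b.n + c.n = a.n + (b.n + c.n)
      ring
  one_mul a := by
    ext
    · show 0 + sgn 0 * a.k = a.k; simp
    · show 0 + sgn 0 * a.l = a.l; simp
    · show 0 + a.m + 0 * sgn 0 * a.k = a.m; simp
    · show 0 + a.n = a.n; simp
  mul_one a := by
    ext
    · show a.k + sgn a.n * 0 = a.k; simp
    · show a.l + sgn a.n * 0 = a.l; simp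
    · show a.m + 0 + a.l * sgn a.n * 0 = a.m; simp
    · show a.n + 0 = a.n; simp
  inv_mul_cancel a := by
    ext
    · show -(sgn a.n * a.k) + sgn a.n * a.k = 0; ring
    · show -(sgn a.n * a.l) + sgn a.n * a.l = 0; ring
    · show -a.m + a.l * a.k + a.m + -(sgn a.n * a.l) * sgn a.n * a.k = 0
      linear_combination (-(a.l * a.k)) * sgn_mul_self a.n
    · show a.n + a.n = 0; exact CharTwo.add_self_eq_zero a.n

@[simp] lemma mul_k (a b : GG) : (a * b).k = a.k + sgn a.n * b.k := rfl
@[simp] lemma mul_l (a b : GG) : (a * b).l = a.l + sgn a.n * b.l := rfl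
@[simp] lemma mul_m (a b : GG) : (a * b).m = a.m + b.m + a.l * sgn a.n * b.k := rfl
@[simp] lemma mul_n (a b : GG) : (a * b).n = a.n + b.n := rfl
@[simp] lemma one_k : (1 : GG).k = 0 := rfl
@[simp] lemma one_l : (1 : GG).l = 0 := rfl
@[simp] lemma one_m : (1 : GG).m = 0 := rfl
@[simp] lemma one_n : (1 : GG).n = 0 := rfl

/-- Projection to `ZMod 2` (the `F`-component). -/
def φ : GG →* Multiplicative (ZMod 2) where
  toFun a := Multiplicative.ofAdd a.n
  map_one' := rfl
  map_mul' _ _ := rfl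

lemma mem_ker {a : GG} : a ∈ φ.ker ↔ a.n = 0 := by
  constructor
  · intro h; exact congrArg Multiplicative.toAdd h
  · intro h; exact congrArg Multiplicative.ofAdd h

/-- Squares of elements of the nontrivial coset are central. -/
lemma sq_central (w : GG) (hw : w.n = 1) (v : GG) : v * w ^ 2 = w ^ 2 * v := by
  have h2 : ((1 : ZMod 2) + 1) = 0 := rfl
  rw [pow_two]
  ext <;> simp [hw, h2] <;> ring

lemma pow_Z (a : ℤ) (n : ℕ) : (⟨a, 0, 0, 0⟩ : GG) ^ n = ⟨(n : ℤ) * a, 0, 0, 0⟩ := by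
  induction n with
  | zero => ext <;> simp
  | succ n ih =>
    rw [pow_succ, ih]
    ext <;> simp <;> push_cast <;> ring

lemma pow_Y (a : ℤ) (n : ℕ) : (⟨0, a, 0, 0⟩ : GG) ^ n = ⟨0, (n : ℤ) * a, 0, 0⟩ := by
  induction n with
  | zero => ext <;> simp
  | succ n ih =>
    rw [pow_succ, ih]
    ext <;> simp <;> push_cast <;> ring

end GG

theorem stmt_19 :
    ∃ (G : Type) (_ : Group G) (H : Subgroup G) (g : G),
      H.index = 2 ∧
      (∀ h₁ ∈ H, ∀ h₂ ∈ H, (g * h₁) * (g * h₂) ^ 2 = (g * h₂) ^ 2 * (g * h₁)) ∧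
      (∀ K : Subgroup G, K.FiniteIndex → ¬ ∀ x ∈ K, ∀ y ∈ K, x * y ^ 2 = y ^ 2 * x) := by
  refine ⟨GG, inferInstance, GG.φ.ker, (⟨0, 0, 0, 1⟩ : GG), ?_, ?_, ?_⟩
  · -- index of the kernel is 2
    have hsurj : Function.Surjective GG.φ := fun n => ⟨⟨0, 0, 0, n.toAdd⟩, rfl⟩
    rw [Subgroup.index_ker]
    rw [MonoidHom.range_eq_top_of_surjective GG.φ hsurj]
    rw [Nat.card_congr Subgroup.topEquiv.toEquiv]
    simp [Nat.card_eq_fintype_card]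
  · -- coset law
    intro h₁ hh₁ h₂ hh₂
    have hw : ((⟨0, 0, 0, 1⟩ : GG) * h₂).n = 1 := by
      rw [GG.mul_n]
      show (1 : ZMod 2) + h₂.n = 1
      rw [GG.mem_ker.mp hh₂, add_zero]
    exact GG.sq_central _ hw _
  · -- no finite-index subgroup satisfies the law
    intro K hK hlaw
    set L := K.normalCore with hL
    haveI : L.Normal := Subgroup.normalCore_normal K
    haveI : L.FiniteIndex := Subgroup.finiteIndex_normalCore K
    set n := L.index with hn
    have hnpos : 0 < n := Nat.pos_of_ne_zero Subgroup.FiniteIndex.index_ne_zero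
    have hx : (⟨1, 0, 0, 0⟩ : GG) ^ n ∈ L := Subgroup.pow_index_mem L _
    have hy : (⟨0, 1, 0, 0⟩ : GG) ^ n ∈ L := Subgroup.pow_index_mem L _
    rw [GG.pow_Z] at hx
    rw [GG.pow_Y] at hy
    have hxK : (⟨(n : ℤ) * 1, 0, 0, 0⟩ : GG) ∈ K := K.normalCore_le hx
    have hyK : (⟨0, (n : ℤ) * 1, 0, 0⟩ : GG) ∈ K := K.normalCore_le hy
    have heq := hlaw _ hxK _ hyK
    rw [pow_two] at heq
    have h3 := congrArg GG.m heq
    simp at h3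
    have hnz : (n : ℤ) ≠ 0 := Int.natCast_ne_zero.mpr hnpos.ne'
    nlinarith [hnz.lt_or_gt]
end
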